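/- Let D be an associative dialgebra over a field k. If GKdim D < 1, then GKdim D = 0. -/

import Mathlib

/- Preliminaries: associative dialgebras, their Gelfand–Kirillov dimension,
   and the associated associative algebra. -/

namespace DialgGK

open Filter

/-- An associative dialgebra structure on a `k`-vector space `D`:
two bilinear associative operations `vd` (written `⊢` in the paper) and
`dv` (written `⊣`) satisfying the three dialgebra axioms. -/
structure DialgebraOps (k D : Type*) [Field k] [AddCommGroup D] [Module k D] where
  vd : D → D → D
  dv : D → D → D
  vd_add_left : ∀ x y z, vd (x + y) z = vd x z + vd y z
  vd_add_right : ∀ x y z, vd x (y + z) = vd x y + vd x z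
  vd_smul_left : ∀ (c : k) (x y), vd (c • x) y = c • vd x y
  vd_smul_right : ∀ (c : k) (x y), vd x (c • y) = c • vd x y
  dv_add_left : ∀ x y z, dv (x + y) z = dv x z + dv y z
  dv_add_right : ∀ x y z, dv x (y + z) = dv x y + dv x z
  dv_smul_left : ∀ (c : k) (x y), dv (c • x) y = c • dv x y
  dv_smul_right : ∀ (c : k) (x y), dv x (c • y) = c • dv x y
  vd_assoc : ∀ x y z, vd (vd x y) z = vd x (vd y z)
  dv_assoc : ∀ x y z, dv (dv x y) z = dv x (dv y z)
  dv_vd : ∀ x y z, dv x (vd y z) = dv x (dv y z)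
  vd_dv : ∀ x y z, vd (dv x y) z = vd (vd x y) z
  mid : ∀ x y z, vd x (dv y z) = dv (vd x y) z

variable {k : Type*} [Field k] {D : Type*} [AddCommGroup D] [Module k D]

/-- The span of all products `f x y` with `x ∈ V`, `y ∈ W`. -/
def opSpan (f : D → D → D) (V W : Submodule k D) : Submodule k D :=
  Submodule.span k {z | ∃ x ∈ V, ∃ y ∈ W, z = f x y}

/-- `diPow Dl V n` is `V^n`: `V^1 = V` and
`V^n = Σ_{i=1}^{n-1} (V^i ⊢ V^{n-i} + V^i ⊣ V^{n-i})` for `n ≥ 2`. -/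
def diPow (Dl : DialgebraOps k D) (V : Submodule k D) : ℕ → Submodule k D
  | 0 => ⊥
  | 1 => V
  | n + 2 =>
      ⨆ i : Fin (n + 1),
        opSpan Dl.vd (diPow Dl V (i.1 + 1)) (diPow Dl V (n + 1 - i.1)) ⊔
          opSpan Dl.dv (diPow Dl V (i.1 + 1)) (diPow Dl V (n + 1 - i.1))
  termination_by n => n
  decreasing_by
  all_goals (have := i.2; omega)

/-- `diPowLe Dl V n` is `V^{≤ n} = V^1 + ⋯ + V^n`. -/
def diPowLe (Dl : DialgebraOps k D) (V : Submodule k D) (n : ℕ) : Submodule k D :=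
  ⨆ i ∈ Finset.Icc 1 n, diPow Dl V i

/-- The Gelfand–Kirillov dimension of a dialgebra:
`GKdim D = sup_V limsup_{n→∞} log_n dim (V^{≤n})`, the supremum over all
finite-dimensional subspaces `V`. -/
noncomputable def diGKdim (Dl : DialgebraOps k D) : EReal :=
  ⨆ V : {V : Submodule k D // FiniteDimensional k V},
    Filter.limsup
      (fun n : ℕ => ((Real.logb n (Module.finrank k (diPowLe Dl V.1 n)) : ℝ) : EReal))
      Filter.atTop

section Assoc

variable (k) {A : Type*} [NonUnitalRing A] [Module k A]
  [SMulCommClass k A A] [IsScalarTower k A A]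

/-- `aPow k V n` is the `n`-th power `Vⁿ` of a subspace of an associative algebra:
the span of all products of `n` elements of `V`. -/
def aPow (V : Submodule k A) : ℕ → Submodule k A
  | 0 => ⊥
  | 1 => V
  | n + 2 => opSpan (· * ·) (aPow V (n + 1)) V

/-- `aPowLe k V n = V + V² + ⋯ + Vⁿ`. -/
def aPowLe (V : Submodule k A) (n : ℕ) : Submodule k A :=
  ⨆ i ∈ Finset.Icc 1 n, aPow k V i

variable (A) in
/-- The Gelfand–Kirillov dimension of an associative algebra:
`GKdim A = sup_V limsup_{n→∞} log_n dim (V + V² + ⋯ + Vⁿ)`, the supremum over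
all finite-dimensional subspaces `V`. -/
noncomputable def aGKdim : EReal :=
  ⨆ V : {V : Submodule k A // FiniteDimensional k V},
    Filter.limsup
      (fun n : ℕ => ((Real.logb n (Module.finrank k (aPowLe k V.1 n)) : ℝ) : EReal))
      Filter.atTop

end Assoc

/-- A sub-dialgebra: a linear subspace closed under both operations. -/
structure IsSubDialgebra (Dl : DialgebraOps k D) (P : Submodule k D) : Prop where
  vd_mem : ∀ ⦃x⦄, x ∈ P → ∀ ⦃y⦄, y ∈ P → Dl.vd x y ∈ P
  dv_mem : ∀ ⦃x⦄, x ∈ P → ∀ ⦃y⦄, y ∈ P → Dl.dv x y ∈ P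

/-- The smallest sub-dialgebra containing a set `X`; `D` is generated by `X`
iff this closure is `⊤`. -/
def subDialgebraClosure (Dl : DialgebraOps k D) (X : Set D) : Submodule k D :=
  sInf {P : Submodule k D | IsSubDialgebra Dl P ∧ X ⊆ ↑P}

/-- The dialgebra structure induced on a sub-dialgebra. -/
def DialgebraOps.restrict (Dl : DialgebraOps k D) {P : Submodule k D}
    (h : IsSubDialgebra Dl P) : DialgebraOps k ↥P where
  vd x y := ⟨Dl.vd x y, h.vd_mem x.2 y.2⟩
  dv x y := ⟨Dl.dv x y, h.dv_mem x.2 y.2⟩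
  vd_add_left := by intros; apply Subtype.ext; simp [Dl.vd_add_left]
  vd_add_right := by intros; apply Subtype.ext; simp [Dl.vd_add_right]
  vd_smul_left := by intros; apply Subtype.ext; simp [Dl.vd_smul_left]
  vd_smul_right := by intros; apply Subtype.ext; simp [Dl.vd_smul_right]
  dv_add_left := by intros; apply Subtype.ext; simp [Dl.dv_add_left]
  dv_add_right := by intros; apply Subtype.ext; simp [Dl.dv_add_right]
  dv_smul_left := by intros; apply Subtype.ext; simp [Dl.dv_smul_left]
  dv_smul_right := by intros; apply Subtype.ext; simp [Dl.dv_smul_right]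
  vd_assoc := by intros; apply Subtype.ext; simp [Dl.vd_assoc]
  dv_assoc := by intros; apply Subtype.ext; simp [Dl.dv_assoc]
  dv_vd := by intros; apply Subtype.ext; simp [Dl.dv_vd]
  vd_dv := by intros; apply Subtype.ext; simp [Dl.vd_dv]
  mid := by intros; apply Subtype.ext; simp [Dl.mid]

/-- A (two-sided) ideal of a dialgebra. -/
structure IsDiIdeal (Dl : DialgebraOps k D) (I : Submodule k D) : Prop where
  vd_mem_left : ∀ ⦃x⦄, x ∈ I → ∀ y : D, Dl.vd x y ∈ I
  vd_mem_right : ∀ ⦃x⦄, x ∈ I → ∀ y : D, Dl.vd y x ∈ I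
  dv_mem_left : ∀ ⦃x⦄, x ∈ I → ∀ y : D, Dl.dv x y ∈ I
  dv_mem_right : ∀ ⦃x⦄, x ∈ I → ∀ y : D, Dl.dv y x ∈ I

/-- The ideal of the dialgebra generated by a set `S`. -/
def diIdealGen (Dl : DialgebraOps k D) (S : Set D) : Submodule k D :=
  sInf {I : Submodule k D | IsDiIdeal Dl I ∧ S ⊆ ↑I}

/-- The set `S = {x ⊢ y − x ⊣ y : x, y ∈ D}`. -/
def diS (Dl : DialgebraOps k D) : Set D :=
  {z | ∃ x y : D, z = Dl.vd x y - Dl.dv x y}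

/-- `π : D →ₗ[k] A` realizes `A` as the associative algebra `A_D = D / Id(S)`
associated to the dialgebra `D`: it is surjective, turns both operations into
the multiplication of `A`, and has kernel exactly `Id(S)`. -/
structure IsAssociatedAlgebra {A : Type*} [NonUnitalRing A] [Module k A]
    [SMulCommClass k A A] [IsScalarTower k A A]
    (Dl : DialgebraOps k D) (π : D →ₗ[k] A) : Prop where
  surjective : Function.Surjective π
  map_vd : ∀ x y, π (Dl.vd x y) = π x * π y
  map_dv : ∀ x y, π (Dl.dv x y) = π x * π y
  ker : LinearMap.ker π = diIdealGen Dl (diS Dl)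

/-- `a ⊣ b₁ ⊣ b₂ ⊣ ⋯ ⊣ bₙ` (left-normed). -/
def dashvList (Dl : DialgebraOps k D) : D → List D → D
  | a, [] => a
  | a, b :: l => dashvList Dl (Dl.dv a b) l

/-- `b₁ ⊢ b₂ ⊢ ⋯ ⊢ bₙ ⊢ a` (right-normed). -/
def vdashList (Dl : DialgebraOps k D) : List D → D → D
  | [], a => a
  | b :: l, a => Dl.vd b (vdashList Dl l a)

/-- The monomial `pre₁ ⊢ ⋯ ⊢ preₛ ⊢ mid ⊣ post₁ ⊣ ⋯ ⊣ postₜ`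
(all parenthesizations agree by the dialgebra axioms). -/
def monomial (Dl : DialgebraOps k D) (pre : List D) (mid : D) (post : List D) : D :=
  vdashList Dl pre (dashvList Dl mid post)

/-- The value in `D` of the formal monomial `[u]_p = [a₁ … aₙ]_p`
(`u` a word in letters `L`, interpreted via `xf : L → D`), that is
`a₁ ⊢ ⋯ ⊢ a_{p-1} ⊢ a_p ⊣ a_{p+1} ⊣ ⋯ ⊣ aₙ`;  `0` if `p` is out of range. -/
def fmVal (Dl : DialgebraOps k D) {L : Type*} (xf : L → D) (u : List L) (p : ℕ) : D :=
  match (u.map xf).drop (p - 1) with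
  | [] => 0
  | a :: rest => monomial Dl ((u.map xf).take (p - 1)) a rest

/-- `[x_s x_{s+1} … x_t]_p`, the monomial on the (indexed) letters
`x_s, …, x_t` with middle entry `x_p`. -/
def diBracket (Dl : DialgebraOps k D) (x : ℕ → D) (s t p : ℕ) : D :=
  fmVal Dl x ((List.range (t + 1 - s)).map fun i => s + i) (p + 1 - s)

/-- `(u, m)` is a valid formal monomial `[u]_m`: `u` nonempty and `1 ≤ m ≤ ℓ(u)`. -/
def validMono {L : Type*} (w : List L × ℕ) : Prop :=
  w.1 ≠ [] ∧ 1 ≤ w.2 ∧ w.2 ≤ w.1.length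

/-- The length-middle-lexicographic order on formal monomials:
`[u]_p < [v]_q` iff `(ℓ(u), p, u) < (ℓ(v), q, v)` lexicographically
(words of equal length being compared letterwise). -/
def lmlLt {L : Type*} [LinearOrder L] (a b : List L × ℕ) : Prop :=
  a.1.length < b.1.length ∨
    (a.1.length = b.1.length ∧
      (a.2 < b.2 ∨ (a.2 = b.2 ∧ List.Lex (· < ·) a.1 b.1)))

variable (k) in
/-- The shortest-middle-lexicographic basis of the dialgebra (generated by the
letters `L` via `xf`): the set of formal monomials whose value is nonzero and
is not a linear combination of values of strictly smaller monomials. -/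
def smlBasis (Dl : DialgebraOps k D) {L : Type*} [LinearOrder L] (xf : L → D) :
    Set (List L × ℕ) :=
  {w | validMono w ∧ fmVal Dl xf w.1 w.2 ≠ 0 ∧
    fmVal Dl xf w.1 w.2 ∉
      Submodule.span k
        ((fun w' : List L × ℕ => fmVal Dl xf w'.1 w'.2) ''
          {w' | validMono w' ∧ lmlLt w' w})}

/-- The value in an associative algebra of the formal monomial `[u]_p`:
just the product `a₁a₂⋯aₙ` (independent of the middle index). -/
def amVal {A L : Type*} [NonUnitalRing A] (xf : L → A) (u : List L) : A :=
  match u.map xf with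
  | [] => 0
  | a :: rest => List.foldl (· * ·) a rest

/-- The shortest-middle-lexicographic basis of an associative algebra
(generated by the letters `L` via `xf`). -/
def smlBasisA (k : Type*) {A L : Type*} [Field k] [NonUnitalRing A] [Module k A]
    [SMulCommClass k A A] [IsScalarTower k A A] [LinearOrder L] (xf : L → A) :
    Set (List L × ℕ) :=
  {w | validMono w ∧ amVal xf w.1 ≠ 0 ∧
    amVal xf w.1 ∉
      Submodule.span k
        ((fun w' : List L × ℕ => amVal xf w'.1) ''
          {w' | validMono w' ∧ lmlLt w' w})}

/-- Every associative algebra is a dialgebra with both operations equal to its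
multiplication. -/
def mulDialgebra (k A : Type*) [Field k] [NonUnitalRing A] [Module k A]
    [SMulCommClass k A A] [IsScalarTower k A A] : DialgebraOps k A where
  vd x y := x * y
  dv x y := x * y
  vd_add_left := add_mul
  vd_add_right := mul_add
  vd_smul_left := smul_mul_assoc
  vd_smul_right c x y := (mul_smul_comm c x y)
  dv_add_left := add_mul
  dv_add_right := mul_add
  dv_smul_left := smul_mul_assoc
  dv_smul_right c x y := (mul_smul_comm c x y)
  vd_assoc := mul_assoc
  dv_assoc := mul_assoc
  dv_vd _ _ _ := rfl
  vd_dv _ _ _ := rfl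
  mid x y z := (mul_assoc x y z).symm

end DialgGK
namespace DialgGKProof
open DialgGK Submodule

variable {k : Type*} [Field k] {D : Type*} [AddCommGroup D] [Module k D]

/-- `⊢` as a bundled bilinear map. -/
def vdL (Dl : DialgebraOps k D) : D →ₗ[k] D →ₗ[k] D :=
  LinearMap.mk₂ k Dl.vd Dl.vd_add_left Dl.vd_smul_left Dl.vd_add_right Dl.vd_smul_right

/-- `⊣` as a bundled bilinear map. -/
def dvL (Dl : DialgebraOps k D) : D →ₗ[k] D →ₗ[k] D :=
  LinearMap.mk₂ k Dl.dv Dl.dv_add_left Dl.dv_smul_left Dl.dv_add_right Dl.dv_smul_right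

@[simp] lemma vdL_apply (Dl : DialgebraOps k D) (x y : D) : vdL Dl x y = Dl.vd x y := rfl
@[simp] lemma dvL_apply (Dl : DialgebraOps k D) (x y : D) : dvL Dl x y = Dl.dv x y := rfl

lemma opSpan_eq (F : D →ₗ[k] D →ₗ[k] D) (V W : Submodule k D) :
    opSpan (fun x y => F x y) V W = Submodule.map₂ F V W := by
  rw [map₂_eq_span_image2, opSpan]
  congr 1
  ext z
  simp only [Set.mem_setOf_eq, Set.mem_image2]
  constructor
  · rintro ⟨x, hx, y, hy, rfl⟩; exact ⟨x, hx, y, hy, rfl⟩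
  · rintro ⟨x, hx, y, hy, rfl⟩; exact ⟨x, hx, y, hy, rfl⟩

lemma opSpan_vd (Dl : DialgebraOps k D) (V W : Submodule k D) :
    opSpan Dl.vd V W = Submodule.map₂ (vdL Dl) V W := opSpan_eq (vdL Dl) V W

lemma opSpan_dv (Dl : DialgebraOps k D) (V W : Submodule k D) :
    opSpan Dl.dv V W = Submodule.map₂ (dvL Dl) V W := opSpan_eq (dvL Dl) V W

lemma map₂_reassoc (F G F' G' : D →ₗ[k] D →ₗ[k] D)
    (h : ∀ a b c, F (G a b) c = F' a (G' b c)) (A B C : Submodule k D) :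
    Submodule.map₂ F (Submodule.map₂ G A B) C ≤
      Submodule.map₂ F' A (Submodule.map₂ G' B C) := by
  rw [map₂_le]
  intro x hx c hc
  have hle : Submodule.map₂ G A B ≤
      comap (F.flip c) (Submodule.map₂ F' A (Submodule.map₂ G' B C)) := by
    rw [map₂_le]
    intro a ha b hb
    simp only [mem_comap, LinearMap.flip_apply, h]
    exact apply_mem_map₂ _ ha (apply_mem_map₂ _ hb hc)
  simpa using hle hx

lemma map₂_reassoc' (F G F' G' : D →ₗ[k] D →ₗ[k] D)
    (h : ∀ a b c, F a (G b c) = F' (G' a b) c) (A B C : Submodule k D) :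
    Submodule.map₂ F A (Submodule.map₂ G B C) ≤
      Submodule.map₂ F' (Submodule.map₂ G' A B) C := by
  rw [map₂_le]
  intro a ha x hx
  have hle : Submodule.map₂ G B C ≤
      comap (F a) (Submodule.map₂ F' (Submodule.map₂ G' A B) C) := by
    rw [map₂_le]
    intro b hb c hc
    simp only [mem_comap, h]
    exact apply_mem_map₂ _ (apply_mem_map₂ _ ha hb) hc
  simpa using hle hx

variable (Dl : DialgebraOps k D) (V : Submodule k D)

lemma diPow_two_eq (n : ℕ) :
    diPow Dl V (n + 2) =
      ⨆ i : Fin (n + 1),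
        Submodule.map₂ (vdL Dl) (diPow Dl V (i.1 + 1)) (diPow Dl V (n + 1 - i.1)) ⊔
          Submodule.map₂ (dvL Dl) (diPow Dl V (i.1 + 1)) (diPow Dl V (n + 1 - i.1)) := by
  rw [diPow]
  simp only [opSpan_vd, opSpan_dv]

lemma mul_le_pow {a b : ℕ} (ha : 1 ≤ a) (hb : 1 ≤ b) (F : D →ₗ[k] D →ₗ[k] D)
    (hF : F = vdL Dl ∨ F = dvL Dl) :
    Submodule.map₂ F (diPow Dl V a) (diPow Dl V b) ≤ diPow Dl V (a + b) := by
  obtain ⟨a', rfl⟩ : ∃ a', a = a' + 1 := ⟨a - 1, by omega⟩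
  obtain ⟨b', rfl⟩ : ∃ b', b = b' + 1 := ⟨b - 1, by omega⟩
  have he : a' + 1 + (b' + 1) = a' + b' + 2 := by ring
  rw [he, diPow_two_eq]
  have hi : a' < a' + b' + 1 := by omega
  have h2 : a' + b' + 1 - a' = b' + 1 := by omega
  refine le_trans ?_ (le_iSup _ (⟨a', hi⟩ : Fin (a' + b' + 1)))
  simp only [h2]
  rcases hF with rfl | rfl
  · exact le_sup_left
  · exact le_sup_right


/-- Every `V^m` (`m ≥ 2`) lies in `V ⊢ V^{m-1} + V^{m-1} ⊣ V`. -/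
lemma diPow_peel : ∀ m, 2 ≤ m →
    diPow Dl V m ≤
      Submodule.map₂ (vdL Dl) (diPow Dl V 1) (diPow Dl V (m - 1)) ⊔
        Submodule.map₂ (dvL Dl) (diPow Dl V (m - 1)) (diPow Dl V 1) := by
  intro m
  induction m using Nat.strong_induction_on with
  | _ m IH =>
  intro hm
  set RHS := Submodule.map₂ (vdL Dl) (diPow Dl V 1) (diPow Dl V (m - 1)) ⊔
      Submodule.map₂ (dvL Dl) (diPow Dl V (m - 1)) (diPow Dl V 1) with hRHS
  -- claim for ⊢-products, by induction on the left exponent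
  have claimL : ∀ i, ∀ j, 1 ≤ i → 1 ≤ j → i + j = m →
      Submodule.map₂ (vdL Dl) (diPow Dl V i) (diPow Dl V j) ≤ RHS := by
    intro i
    induction i using Nat.strong_induction_on with
    | _ i IHi =>
    intro j hi hj hij
    rcases eq_or_lt_of_le hi with h1 | h2
    · -- i = 1
      have : j = m - 1 := by omega
      subst this
      rw [← h1]
      exact le_sup_left
    · -- i ≥ 2
      have h2 : 2 ≤ i := h2
      have hiltm : i < m := by omega
      have hstep := IH i hiltm h2
      calc Submodule.map₂ (vdL Dl) (diPow Dl V i) (diPow Dl V j)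
          ≤ Submodule.map₂ (vdL Dl)
              (Submodule.map₂ (vdL Dl) (diPow Dl V 1) (diPow Dl V (i - 1)) ⊔
                Submodule.map₂ (dvL Dl) (diPow Dl V (i - 1)) (diPow Dl V 1))
              (diPow Dl V j) := map₂_le_map₂_left hstep
        _ = Submodule.map₂ (vdL Dl)
              (Submodule.map₂ (vdL Dl) (diPow Dl V 1) (diPow Dl V (i - 1)))
              (diPow Dl V j) ⊔
            Submodule.map₂ (vdL Dl)
              (Submodule.map₂ (dvL Dl) (diPow Dl V (i - 1)) (diPow Dl V 1))
              (diPow Dl V j) := map₂_sup_left _ _ _ _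
        _ ≤ RHS := by
            apply sup_le
            · -- (V ⊢ V^{i-1}) ⊢ V^j ≤ V ⊢ (V^{i-1} ⊢ V^j) ≤ V ⊢ V^{m-1}
              refine le_trans (map₂_reassoc (vdL Dl) (vdL Dl) (vdL Dl) (vdL Dl)
                (fun a b c => by simp [Dl.vd_assoc]) _ _ _) ?_
              refine le_trans (map₂_le_map₂_right
                (mul_le_pow Dl V (by omega) hj _ (Or.inl rfl))) ?_
              have : i - 1 + j = m - 1 := by omega
              rw [this]
              exact le_sup_left
            · -- (V^{i-1} ⊣ V) ⊢ V^j ≤ V^{i-1} ⊢ (V ⊢ V^j) ≤ V^{i-1} ⊢ V^{1+j}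
              refine le_trans (map₂_reassoc (vdL Dl) (dvL Dl) (vdL Dl) (vdL Dl)
                (fun a b c => by simp [Dl.vd_dv, Dl.vd_assoc]) _ _ _) ?_
              refine le_trans (map₂_le_map₂_right
                (mul_le_pow Dl V le_rfl hj _ (Or.inl rfl))) ?_
              exact IHi (i - 1) (by omega) (1 + j) (by omega) (by omega) (by omega)
  -- claim for ⊣-products, by induction on the right exponent
  have claimR : ∀ j, ∀ i, 1 ≤ i → 1 ≤ j → i + j = m →
      Submodule.map₂ (dvL Dl) (diPow Dl V i) (diPow Dl V j) ≤ RHS := by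
    intro j
    induction j using Nat.strong_induction_on with
    | _ j IHj =>
    intro i hi hj hij
    rcases eq_or_lt_of_le hj with h1 | h2
    · have : i = m - 1 := by omega
      subst this
      rw [← h1]
      exact le_sup_right
    · have h2 : 2 ≤ j := h2
      have hjltm : j < m := by omega
      have hstep := IH j hjltm h2
      calc Submodule.map₂ (dvL Dl) (diPow Dl V i) (diPow Dl V j)
          ≤ Submodule.map₂ (dvL Dl) (diPow Dl V i)
              (Submodule.map₂ (vdL Dl) (diPow Dl V 1) (diPow Dl V (j - 1)) ⊔
                Submodule.map₂ (dvL Dl) (diPow Dl V (j - 1)) (diPow Dl V 1)) :=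
            map₂_le_map₂_right hstep
        _ = Submodule.map₂ (dvL Dl) (diPow Dl V i)
              (Submodule.map₂ (vdL Dl) (diPow Dl V 1) (diPow Dl V (j - 1))) ⊔
            Submodule.map₂ (dvL Dl) (diPow Dl V i)
              (Submodule.map₂ (dvL Dl) (diPow Dl V (j - 1)) (diPow Dl V 1)) :=
            map₂_sup_right _ _ _ _
        _ ≤ RHS := by
            apply sup_le
            · -- V^i ⊣ (V ⊢ V^{j-1}) = (V^i ⊣ V) ⊣ V^{j-1}
              refine le_trans (map₂_reassoc' (dvL Dl) (vdL Dl) (dvL Dl) (dvL Dl)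
                (fun a b c => by simp [Dl.dv_vd, Dl.dv_assoc]) _ _ _) ?_
              refine le_trans (map₂_le_map₂_left
                (mul_le_pow Dl V hi le_rfl _ (Or.inr rfl))) ?_
              exact IHj (j - 1) (by omega) (i + 1) (by omega) (by omega) (by omega)
            · -- V^i ⊣ (V^{j-1} ⊣ V) = (V^i ⊣ V^{j-1}) ⊣ V
              refine le_trans (map₂_reassoc' (dvL Dl) (dvL Dl) (dvL Dl) (dvL Dl)
                (fun a b c => by simp [Dl.dv_assoc]) _ _ _) ?_
              refine le_trans (map₂_le_map₂_left
                (mul_le_pow Dl V hi (by omega) _ (Or.inr rfl))) ?_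
              have : i + (j - 1) = m - 1 := by omega
              rw [this]
              exact le_sup_right
  obtain ⟨n, rfl⟩ : ∃ n, m = n + 2 := ⟨m - 2, by omega⟩
  rw [diPow_two_eq]
  apply iSup_le
  intro i
  apply sup_le
  · exact claimL (i.1 + 1) (n + 1 - i.1) (by omega) (by have := i.2; omega)
      (by have := i.2; omega)
  · exact claimR (n + 1 - i.1) (i.1 + 1) (by omega) (by have := i.2; omega)
      (by have := i.2; omega)


@[simp] lemma diPow_zero : diPow Dl V 0 = ⊥ := by rw [diPow]
@[simp] lemma diPow_one : diPow Dl V 1 = V := by rw [diPow]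

lemma diPow_fg (hV : V.FG) : ∀ n, (diPow Dl V n).FG := by
  intro n
  induction n using Nat.strong_induction_on with
  | _ n IH =>
  match n with
  | 0 => rw [diPow_zero]; exact fg_bot
  | 1 => rw [diPow_one]; exact hV
  | n + 2 =>
    rw [diPow_two_eq]
    refine Submodule.fg_iSup _ (fun i => ?_)
    exact (Submodule.FG.map₂ _ (IH _ (by have := i.2; omega)) (IH _ (by have := i.2; omega))).sup
      (Submodule.FG.map₂ _ (IH _ (by have := i.2; omega)) (IH _ (by have := i.2; omega)))

lemma diPowLe_fg (hV : V.FG) (n : ℕ) : (diPowLe Dl V n).FG :=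
  fg_biSup _ _ fun i _ => diPow_fg Dl V hV i

lemma diPow_le_diPowLe {i n : ℕ} (h1 : 1 ≤ i) (h2 : i ≤ n) :
    diPow Dl V i ≤ diPowLe Dl V n := by
  refine le_trans ?_ (le_iSup _ i)
  exact le_iSup (fun _ : i ∈ Finset.Icc 1 n => diPow Dl V i) (Finset.mem_Icc.mpr ⟨h1, h2⟩)

lemma diPowLe_mono {m n : ℕ} (h : m ≤ n) : diPowLe Dl V m ≤ diPowLe Dl V n := by
  apply iSup₂_le
  intro i hi
  rw [Finset.mem_Icc] at hi
  exact diPow_le_diPowLe Dl V hi.1 (hi.2.trans h)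

/-- If `V^{N+1} ⊆ V^{≤N}` then `V^m ⊆ V^{≤N}` for all `m ≥ N+1`. -/
lemma diPow_stab {N : ℕ} (hN : 1 ≤ N) (hst : diPow Dl V (N + 1) ≤ diPowLe Dl V N) :
    ∀ m, N + 1 ≤ m → diPow Dl V m ≤ diPowLe Dl V N := by
  have wle : diPowLe Dl V (N + 1) ≤ diPowLe Dl V N := by
    apply iSup₂_le
    intro i hi
    rw [Finset.mem_Icc] at hi
    rcases Nat.lt_or_ge i (N + 1) with hlt | hge
    · exact diPow_le_diPowLe Dl V hi.1 (by omega)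
    · have : i = N + 1 := by omega
      subst this; exact hst
  intro m
  induction m using Nat.strong_induction_on with
  | _ m IH =>
  intro hm
  rcases Nat.lt_or_ge m (N + 2) with hlt | hge
  · have : m = N + 1 := by omega
    subst this; exact hst
  · have hprev : diPow Dl V (m - 1) ≤ diPowLe Dl V N := by
      rcases Nat.lt_or_ge (m - 1) (N + 1) with h | h
      · exact diPow_le_diPowLe Dl V (by omega) (by omega)
      · exact IH (m - 1) (by omega) h
    refine le_trans (diPow_peel Dl V m (by omega)) (sup_le ?_ ?_)
    · refine le_trans (map₂_le_map₂_right hprev) ?_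
      rw [diPowLe, map₂_iSup_right]
      apply iSup_le; intro i
      rw [map₂_iSup_right]
      apply iSup_le; intro hi
      rw [Finset.mem_Icc] at hi
      refine le_trans (mul_le_pow Dl V le_rfl hi.1 _ (Or.inl rfl)) ?_
      exact le_trans (diPow_le_diPowLe Dl V (by omega) (by omega)) wle
    · refine le_trans (map₂_le_map₂_left hprev) ?_
      rw [diPowLe, map₂_iSup_left]
      apply iSup_le; intro i
      rw [map₂_iSup_left]
      apply iSup_le; intro hi
      rw [Finset.mem_Icc] at hi
      refine le_trans (mul_le_pow Dl V hi.1 le_rfl _ (Or.inr rfl)) ?_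
      exact le_trans (diPow_le_diPowLe Dl V (by omega) (by omega)) wle

lemma diPowLe_stab {N : ℕ} (hN : 1 ≤ N) (hst : diPow Dl V (N + 1) ≤ diPowLe Dl V N) :
    ∀ m, N ≤ m → diPowLe Dl V m = diPowLe Dl V N := by
  intro m hm
  refine le_antisymm ?_ (diPowLe_mono Dl V hm)
  apply iSup₂_le
  intro i hi
  rw [Finset.mem_Icc] at hi
  rcases Nat.lt_or_ge i (N + 1) with h | h
  · exact diPow_le_diPowLe Dl V hi.1 (by omega)
  · exact diPow_stab Dl V hN hst i h

section Analytic
open Filter Topology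

lemma tendsto_logb_const (c : ℝ) :
    Tendsto (fun n : ℕ => Real.logb n c) atTop (𝓝 0) := by
  simp only [Real.logb]
  exact Filter.Tendsto.div_atTop tendsto_const_nhds
    (Real.tendsto_log_atTop.comp tendsto_natCast_atTop_atTop)

lemma tendsto_logb_sub_one :
    Tendsto (fun n : ℕ => Real.logb n ((n : ℝ) - 1)) atTop (𝓝 1) := by
  have h1 : Tendsto (fun n : ℕ => Real.log (((n : ℝ) - 1) / (n : ℝ))) atTop (𝓝 0) := by
    have ht : Tendsto (fun n : ℕ => ((n : ℝ) - 1) / (n : ℝ)) atTop (𝓝 1) := by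
      have : Tendsto (fun n : ℕ => 1 - ((n : ℝ))⁻¹) atTop (𝓝 1) := by
        simpa using tendsto_const_nhds.sub (tendsto_inv_atTop_nhds_zero_nat (𝕜 := ℝ))
      refine this.congr' ?_
      filter_upwards [eventually_ge_atTop 1] with n hn
      have hn0 : (n : ℝ) ≠ 0 := Nat.cast_ne_zero.mpr (by omega)
      field_simp
    have hc : ContinuousAt Real.log 1 := Real.continuousAt_log one_ne_zero
    have := hc.tendsto.comp ht
    simpa [Real.log_one, Function.comp_def] using this
  have h2 : Tendsto (fun n : ℕ => (Real.log (n : ℝ))⁻¹) atTop (𝓝 0) :=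
    (Real.tendsto_log_atTop.comp tendsto_natCast_atTop_atTop).inv_tendsto_atTop
  have h3 : Tendsto
      (fun n : ℕ => Real.log (((n : ℝ) - 1) / (n : ℝ)) * (Real.log (n : ℝ))⁻¹ + 1)
      atTop (𝓝 1) := by
    have := (h1.mul h2).add (tendsto_const_nhds (x := (1 : ℝ)))
    simpa using this
  refine h3.congr' ?_
  filter_upwards [eventually_ge_atTop 2] with n hn
  have hn1 : (1 : ℝ) < (n : ℝ) := by exact_mod_cast (by omega : 1 < n)
  have hn0 : (n : ℝ) ≠ 0 := by linarith
  have hm0 : (n : ℝ) - 1 ≠ 0 := by linarith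
  have hlog : Real.log (n : ℝ) ≠ 0 :=
    Real.log_ne_zero_of_pos_of_ne_one (by linarith) (by linarith)
  have hsplit : Real.log (((n : ℝ) - 1) / (n : ℝ)) =
      Real.log ((n : ℝ) - 1) - Real.log (n : ℝ) := Real.log_div hm0 hn0
  rw [hsplit, Real.logb]
  field_simp
  ring

end Analytic

end DialgGKProof

open DialgGKProof Filter Topology in
open DialgGK in
/-- If `GKdim D < 1` then `GKdim D = 0`. -/
theorem diGKdim_eq_zero_of_lt_one
    {k : Type*} [Field k] {D : Type*} [AddCommGroup D] [Module k D] (Dl : DialgebraOps k D) (h : diGKdim Dl < 1) :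
    diGKdim Dl = 0 := by
  classical
  have key : ∀ (V : Submodule k D), FiniteDimensional k V →
      Filter.limsup
        (fun n : ℕ => ((Real.logb n (Module.finrank k (diPowLe Dl V n)) : ℝ) : EReal))
        Filter.atTop = 0 := by
    intro V hV
    have hVfg : V.FG := (Submodule.fg_iff_finiteDimensional V).mpr hV
    haveI hWfin : ∀ n, FiniteDimensional k (diPowLe Dl V n) := fun n =>
      (Submodule.fg_iff_finiteDimensional _).mp (diPowLe_fg Dl V hVfg n)
    by_cases hs : ∃ N, 1 ≤ N ∧ diPow Dl V (N + 1) ≤ diPowLe Dl V N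
    · obtain ⟨N, hN1, hNs⟩ := hs
      have hstab := diPowLe_stab Dl V hN1 hNs
      set d : ℝ := (Module.finrank k (diPowLe Dl V N) : ℝ) with hd
      have hev : ∀ᶠ n : ℕ in atTop,
          ((Real.logb n (Module.finrank k (diPowLe Dl V n)) : ℝ) : EReal) =
            ((Real.logb n d : ℝ) : EReal) := by
        filter_upwards [eventually_ge_atTop N] with n hn
        rw [hstab n hn]
      rw [limsup_congr hev]
      have ht : Tendsto (fun n : ℕ => ((Real.logb n d : ℝ) : EReal)) atTop (𝓝 (0 : EReal)) := by
        have := (EReal.tendsto_coe (a := (0 : ℝ))).mpr (tendsto_logb_const d)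
        simpa using this
      exact ht.limsup_eq
    · exfalso
      push_neg at hs
      have hstrict : ∀ n, 1 ≤ n → diPowLe Dl V n < diPowLe Dl V (n + 1) := by
        intro n hn
        refine lt_of_le_of_ne (diPowLe_mono Dl V (Nat.le_succ n)) fun heq => ?_
        exact hs n hn (le_trans (diPow_le_diPowLe Dl V (by omega) le_rfl) heq.symm.le)
      have hdim : ∀ n, n ≤ Module.finrank k (diPowLe Dl V (n + 1)) := by
        intro n
        induction n with
        | zero => omega
        | succ n IH =>
          have := Submodule.finrank_lt_finrank_of_lt (hstrict (n + 1) (by omega))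
          omega
      have hlow : ∀ᶠ n : ℕ in atTop,
          ((Real.logb n ((n : ℝ) - 1) : ℝ) : EReal) ≤
            ((Real.logb n (Module.finrank k (diPowLe Dl V n)) : ℝ) : EReal) := by
        filter_upwards [eventually_ge_atTop 2] with n hn
        rw [EReal.coe_le_coe_iff]
        have hb : (1 : ℝ) < (n : ℝ) := by exact_mod_cast (by omega : 1 < n)
        have hx : (0 : ℝ) < (n : ℝ) - 1 := by linarith
        refine Real.logb_le_logb_of_le hb hx ?_
        have h1 := hdim (n - 1)
        have h2 : n - 1 + 1 = n := by omega
        rw [h2] at h1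
        have : ((n - 1 : ℕ) : ℝ) ≤ (Module.finrank k (diPowLe Dl V n) : ℝ) := by
          exact_mod_cast h1
        rw [Nat.cast_sub (by omega)] at this
        simpa using this
      have hg : Tendsto (fun n : ℕ => ((Real.logb n ((n : ℝ) - 1) : ℝ) : EReal)) atTop
          (𝓝 (1 : EReal)) := by
        have := (EReal.tendsto_coe (a := (1 : ℝ))).mpr tendsto_logb_sub_one
        simpa using this
      have h1le : (1 : EReal) ≤ Filter.limsup
          (fun n : ℕ => ((Real.logb n (Module.finrank k (diPowLe Dl V n)) : ℝ) : EReal))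
          Filter.atTop := by
        rw [← hg.limsup_eq]
        exact limsup_le_limsup hlow
      have hle : Filter.limsup
          (fun n : ℕ => ((Real.logb n (Module.finrank k (diPowLe Dl V n)) : ℝ) : EReal))
          Filter.atTop ≤ diGKdim Dl := by
        rw [diGKdim]
        exact le_iSup (fun W : {W : Submodule k D // FiniteDimensional k W} =>
          Filter.limsup
            (fun n : ℕ => ((Real.logb n (Module.finrank k (diPowLe Dl W.1 n)) : ℝ) : EReal))
            Filter.atTop) ⟨V, hV⟩
      exact absurd (lt_of_le_of_lt (h1le.trans hle) h) (lt_irrefl _)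
  rw [diGKdim]
  haveI : Nonempty {V : Submodule k D // FiniteDimensional k V} :=
    ⟨⟨⊥, inferInstance⟩⟩
  rw [iSup_congr (fun Vp : {V : Submodule k D // FiniteDimensional k V} => key Vp.1 Vp.2)]
  exact iSup_const
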